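/- Let M be an n×n real symmetric positive definite matrix such that every entry of M^{-1} is nonnegative, let b ∈ ℝⁿ be a vector, and let i be an index with (M^{-1}b)_i ≤ 1. Then 𝟏ᵀ(M + e_i e_iᵀ)^{-1}(b + e_i) ≥ 𝟏ᵀM^{-1}b; that is, the increment Δ(e) = (𝟏ᵀM^{-1}e_i)(1 − e_iᵀM^{-1}b)/(1 + e_iᵀM^{-1}e_i) of the overall opinion caused by adding one edge incident to follower i is nonnegative. -/

import Mathlib

open Matrix

/-- Let `M` be an `n × n` real symmetric positive definite matrix such that every entry of `M⁻¹`
is nonnegative, `b ∈ ℝⁿ` a vector, and `i` an index with `(M⁻¹ b)ᵢ ≤ 1`.  Then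
`𝟏ᵀ (M + eᵢ eᵢᵀ)⁻¹ (b + eᵢ) ≥ 𝟏ᵀ M⁻¹ b`; that is, the increment
`Δ(e) = (𝟏ᵀ M⁻¹ eᵢ)(1 − eᵢᵀ M⁻¹ b) / (1 + eᵢᵀ M⁻¹ eᵢ)` of the overall opinion caused by
adding one edge incident to follower `i` is nonnegative. -/
theorem stmt1 {n : ℕ} (M : Matrix (Fin n) (Fin n) ℝ) (hM : M.PosDef)
    (hnn : ∀ a c : Fin n, 0 ≤ M⁻¹ a c)
    (b : Fin n → ℝ) (i : Fin n) (hb : (M⁻¹ *ᵥ b) i ≤ 1) :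
    (1 : Fin n → ℝ) ⬝ᵥ (M⁻¹ *ᵥ b)
      ≤ (1 : Fin n → ℝ) ⬝ᵥ ((M + vecMulVec (Pi.single i 1) (Pi.single i 1))⁻¹
          *ᵥ (b + Pi.single i 1)) ∧
    0 ≤ ((1 : Fin n → ℝ) ⬝ᵥ (M⁻¹ *ᵥ Pi.single i 1))
          * (1 - Pi.single i 1 ⬝ᵥ (M⁻¹ *ᵥ b))
          / (1 + Pi.single i 1 ⬝ᵥ (M⁻¹ *ᵥ Pi.single i 1)) := by
  set u : Fin n → ℝ := Pi.single i 1 with hu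
  set A := M⁻¹ with hA
  have houter : ∀ x : Fin n → ℝ, vecMulVec u u *ᵥ x = (u ⬝ᵥ x) • u := by
    intro x
    ext j
    simp only [mulVec, dotProduct, vecMulVec_apply, Pi.smul_apply, smul_eq_mul, Finset.mul_sum]
    rw [Finset.sum_mul]
    exact Finset.sum_congr rfl fun k _ => by ring
  have hsemi : (vecMulVec u u).PosSemidef := by
    rw [posSemidef_iff_dotProduct_mulVec]
    constructor
    · ext a c; simp [vecMulVec_apply, mul_comm, Matrix.conjTranspose_apply]
    · intro x
      rw [houter, dotProduct_smul]
      have : star x ⬝ᵥ u = u ⬝ᵥ x := by simp [dotProduct, mul_comm]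
      rw [smul_eq_mul, this]
      exact mul_self_nonneg _
  have hN : (M + vecMulVec u u).PosDef := hM.add_posSemidef hsemi
  have hMinv : A.PosDef := hM.inv
  have hune : u ≠ 0 := by
    intro h
    have := congrFun h i
    simp [hu] at this
  have hq : 0 < u ⬝ᵥ (A *ᵥ u) := by
    have := hMinv.dotProduct_mulVec_pos hune
    simpa using this
  have hd : 0 < 1 + u ⬝ᵥ (A *ᵥ u) := by linarith
  -- dot product of single with vector
  have hdotb : u ⬝ᵥ (A *ᵥ b) = (A *ᵥ b) i := by simp [hu, dotProduct, Pi.single_apply]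
  -- nonnegativity of 1 ⬝ A u
  have hAu : ∀ j, (A *ᵥ u) j = A j i := by
    intro j; simp [hu, mulVec, dotProduct, Pi.single_apply]
  have h1Au : 0 ≤ (1 : Fin n → ℝ) ⬝ᵥ (A *ᵥ u) := by
    rw [dotProduct]
    refine Finset.sum_nonneg fun j _ => ?_
    rw [hAu j]
    simpa using hnn j i
  set c : ℝ := (1 - (A *ᵥ b) i) / (1 + u ⬝ᵥ (A *ᵥ u)) with hc
  have hcnn : 0 ≤ c := div_nonneg (by linarith) hd.le
  -- key: N⁻¹ (b + u) = A b + c • A u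
  have hMA : M * A = 1 := Matrix.mul_nonsing_inv M (isUnit_iff_ne_zero.mpr hM.det_pos.ne')
  have hkey : (M + vecMulVec u u)⁻¹ *ᵥ (b + u) = A *ᵥ b + c • (A *ᵥ u) := by
    have hNx : (M + vecMulVec u u) *ᵥ (A *ᵥ b + c • (A *ᵥ u)) = b + u := by
      rw [add_mulVec, mulVec_add, mulVec_add, mulVec_smul, mulVec_smul,
        mulVec_mulVec, mulVec_mulVec, hMA, one_mulVec, one_mulVec, houter, houter]
      rw [hdotb]
      have : (A *ᵥ b) i + c * (u ⬝ᵥ (A *ᵥ u)) + c = 1 := by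
        rw [hc]; field_simp; ring
      ext j
      simp only [Pi.add_apply, Pi.smul_apply, smul_eq_mul]
      nlinarith [congrArg (fun t => t * u j) this]
    calc (M + vecMulVec u u)⁻¹ *ᵥ (b + u)
        = (M + vecMulVec u u)⁻¹ *ᵥ ((M + vecMulVec u u) *ᵥ (A *ᵥ b + c • (A *ᵥ u))) := by
          rw [hNx]
      _ = A *ᵥ b + c • (A *ᵥ u) := by
          rw [mulVec_mulVec, Matrix.nonsing_inv_mul _ (isUnit_iff_ne_zero.mpr hN.det_pos.ne'), one_mulVec]
  constructor
  · rw [hkey, dotProduct_add, dotProduct_smul, smul_eq_mul]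
    nlinarith
  · rw [hdotb]
    exact div_nonneg (mul_nonneg h1Au (by linarith)) hd.le
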